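/- Let k be a field, f ∈ k[t,x], and set q(α,t,x) = f(t + αx, x) ∈ k[α,t,x]. Let L be a field extension of k(α,t) and φ ∈ L a simple root in x of q, i.e., q(α,t,φ) = 0 and ∂_x q(α,t,φ) ≠ 0, with L = k(α,t,φ). Then the partial-derivative derivations ∂_α and ∂_t of k(α,t) extend uniquely to derivations of L, and these extensions satisfy Burger's equation: ∂_α φ = φ · ∂_t φ. -/

import Mathlib

open Polynomial

/-- The field `k(α,t)`: the fraction field of `k[α,t]`, the variable `false` being `α` and
`true` being `t`. -/
abbrev AlphaTField (k : Type*) [Field k] : Type _ :=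
  FractionRing (MvPolynomial Bool k)

/-- The element `α` of `k(α,t)`. -/
noncomputable def alphaGen (k : Type*) [Field k] : AlphaTField k :=
  algebraMap (MvPolynomial Bool k) (AlphaTField k) (MvPolynomial.X false)

/-- The element `t` of `k(α,t)`. -/
noncomputable def tGen (k : Type*) [Field k] : AlphaTField k :=
  algebraMap (MvPolynomial Bool k) (AlphaTField k) (MvPolynomial.X true)

/-- For `f(t,x) ∈ k[t,x]` (the variable `false` being `t` and `true` being `x`), the
one-variable polynomial `q(α,t,x) = f(t + αx, x)` with coefficients in `k(α,t)`. -/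
noncomputable def burgerQ (k : Type*) [Field k] (f : MvPolynomial Bool k) :
    Polynomial (AlphaTField k) :=
  MvPolynomial.eval₂ (Polynomial.C.comp (algebraMap k (AlphaTField k)))
    (fun i => match i with
      | false => Polynomial.C (tGen k) + Polynomial.C (alphaGen k) * Polynomial.X
      | true => Polynomial.X)
    f

namespace BurgerAux

variable (k : Type*) [Field k] (L : Type*) [Field L] [Algebra (AlphaTField k) L]
    [Algebra k L] [IsScalarTower k (AlphaTField k) L]

/-- the map `k[α,t] → L`. -/
noncomputable def jhom : MvPolynomial Bool k →+* L :=
  (algebraMap (AlphaTField k) L).comp (algebraMap (MvPolynomial Bool k) (AlphaTField k))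

variable {k L}

lemma jhom_C (c : k) : jhom k L (MvPolynomial.C c) = algebraMap k L c := by
  have : (MvPolynomial.C c : MvPolynomial Bool k) = algebraMap k _ c := rfl
  rw [jhom, RingHom.comp_apply, this,
    ← IsScalarTower.algebraMap_apply k (MvPolynomial Bool k) (AlphaTField k),
    ← IsScalarTower.algebraMap_apply k (AlphaTField k) L]

lemma jhom_injective : Function.Injective (jhom k L) :=
  (algebraMap (AlphaTField k) L).injective.comp (IsFractionRing.injective _ _)

lemma jhom_X_false : jhom k L (MvPolynomial.X false)
    = algebraMap (AlphaTField k) L (alphaGen k) := rfl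

lemma jhom_X_true : jhom k L (MvPolynomial.X true)
    = algebraMap (AlphaTField k) L (tGen k) := rfl

/-- Derivation values on the polynomial subring. -/
theorem deriv_jhom (D : Derivation k L L) (r : MvPolynomial Bool k) :
    D (jhom k L r) = jhom k L (MvPolynomial.pderiv false r)
        * D (algebraMap (AlphaTField k) L (alphaGen k))
      + jhom k L (MvPolynomial.pderiv true r)
        * D (algebraMap (AlphaTField k) L (tGen k)) := by
  induction r using MvPolynomial.induction_on with
  | C c => simp [jhom_C]
  | add p q hp hq => simp only [map_add, hp, hq]; ring
  | mul_X p b hp =>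
      have hx : ∀ b' : Bool, D (jhom k L (p * MvPolynomial.X b')) =
          jhom k L p * D (jhom k L (MvPolynomial.X b'))
            + jhom k L (MvPolynomial.X b') * D (jhom k L p) := by
        intro b'
        rw [map_mul, Derivation.leibniz]
        simp [smul_eq_mul, mul_comm]
      cases b with
      | false =>
          rw [hx false, hp]
          have h1 : MvPolynomial.pderiv (R := k) false (p * MvPolynomial.X false)
              = p + MvPolynomial.X false * MvPolynomial.pderiv false p := by
            rw [Derivation.leibniz]
            simp [smul_eq_mul, mul_comm]
          have h2 : MvPolynomial.pderiv (R := k) true (p * MvPolynomial.X false)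
              = MvPolynomial.X false * MvPolynomial.pderiv true p := by
            rw [Derivation.leibniz]
            simp [MvPolynomial.pderiv_X_of_ne (show (true:Bool) ≠ false by decide), smul_eq_mul, mul_comm]
          rw [h1, h2]
          simp only [map_add, map_mul, ← jhom_X_false, ← jhom_X_true]
          ring
      | true =>
          rw [hx true, hp]
          have h1 : MvPolynomial.pderiv (R := k) true (p * MvPolynomial.X true)
              = p + MvPolynomial.X true * MvPolynomial.pderiv true p := by
            rw [Derivation.leibniz]
            simp [smul_eq_mul, mul_comm]
          have h2 : MvPolynomial.pderiv (R := k) false (p * MvPolynomial.X true)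
              = MvPolynomial.X true * MvPolynomial.pderiv false p := by
            rw [Derivation.leibniz]
            simp [MvPolynomial.pderiv_X_of_ne (show (false:Bool) ≠ true by decide), smul_eq_mul, mul_comm]
          rw [h1, h2]
          simp only [map_add, map_mul, ← jhom_X_false, ← jhom_X_true]
          ring

/-- coefficientwise `pderiv b` on `k[α,t][X]`. -/
noncomputable def dmCoeff (b : Bool) :
    Derivation k (Polynomial (MvPolynomial Bool k)) (Polynomial (MvPolynomial Bool k)) :=
  PolynomialModule.equivPolynomialSelf.compDer ((MvPolynomial.pderiv b).mapCoeffs)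

@[simp] lemma dmCoeff_monomial (b : Bool) (n : ℕ) (c : MvPolynomial Bool k) :
    dmCoeff b (monomial n c) = monomial n (MvPolynomial.pderiv b c) := by
  simp [dmCoeff]

@[simp] lemma dmCoeff_C (b : Bool) (c : MvPolynomial Bool k) :
    dmCoeff b (C c) = C (MvPolynomial.pderiv b c) := by
  simp [← monomial_zero_left]

@[simp] lemma dmCoeff_X (b : Bool) :
    dmCoeff b (X : Polynomial (MvPolynomial Bool k)) = 0 := by
  simp [← monomial_one_one_eq_X]

/-- The master formula: value of a derivation on `P(φ)` for `P ∈ k[α,t][X]`. -/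
theorem deriv_eval₂ (D : Derivation k L L) (φ : L) (P : Polynomial (MvPolynomial Bool k)) :
    D (eval₂ (jhom k L) φ P) =
      eval₂ (jhom k L) φ (dmCoeff false P)
          * D (algebraMap (AlphaTField k) L (alphaGen k))
      + eval₂ (jhom k L) φ (dmCoeff true P)
          * D (algebraMap (AlphaTField k) L (tGen k))
      + eval₂ (jhom k L) φ (derivative P) * D φ := by
  induction P using Polynomial.induction_on' with
  | add p q hp hq => simp only [eval₂_add, map_add, hp, hq]; ring
  | monomial n c =>
      rw [eval₂_monomial, Derivation.leibniz, Derivation.leibniz_pow, deriv_jhom]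
      simp only [dmCoeff_monomial, eval₂_monomial, derivative_monomial, eval₂_mul,
        eval₂_natCast, eval₂_monomial, smul_eq_mul, nsmul_eq_mul, map_natCast, map_mul]
      ring

variable (k) in
/-- `q(α,t,x) = f(t+αx,x)` as a polynomial with coefficients in `k[α,t]`. -/
noncomputable def Qpoly (f : MvPolynomial Bool k) : Polynomial (MvPolynomial Bool k) :=
  MvPolynomial.eval₂ (Polynomial.C.comp MvPolynomial.C)
    (fun i => match i with
      | false => Polynomial.C (MvPolynomial.X true)
          + Polynomial.C (MvPolynomial.X false) * Polynomial.X
      | true => Polynomial.X)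
    f

theorem map_Qpoly (f : MvPolynomial Bool k) :
    (Qpoly k f).map (algebraMap (MvPolynomial Bool k) (AlphaTField k)) = burgerQ k f := by
  rw [show ((Qpoly k f).map (algebraMap (MvPolynomial Bool k) (AlphaTField k)))
    = (mapRingHom (algebraMap (MvPolynomial Bool k) (AlphaTField k))) (Qpoly k f) from rfl,
    Qpoly, burgerQ, MvPolynomial.eval₂_comp_left]
  congr 1
  · ext c
    simp only [RingHom.comp_apply, coe_mapRingHom, map_C]
    rw [show (MvPolynomial.C c : MvPolynomial Bool k) = algebraMap k _ c from rfl,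
      ← IsScalarTower.algebraMap_apply]
  · funext b
    cases b <;> simp [tGen, alphaGen]

theorem eval_Qpoly (f : MvPolynomial Bool k) (φ : L) :
    Polynomial.aeval φ (burgerQ k f) = eval₂ (jhom k L) φ (Qpoly k f) := by
  rw [← map_Qpoly, aeval_def, eval₂_map]; rfl

set_option maxHeartbeats 1000000 in
theorem dmCoeff_Qpoly (f : MvPolynomial Bool k) :
    dmCoeff false (Qpoly k f) = X * dmCoeff true (Qpoly k f) := by
  induction f using MvPolynomial.induction_on with
  | C c =>
      have : Qpoly k (MvPolynomial.C c) = C (MvPolynomial.C c) := by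
        simp [Qpoly]
      simp [this]
  | add p q hp hq =>
      have : Qpoly k (p + q) = Qpoly k p + Qpoly k q := by simp [Qpoly]
      simp only [this, map_add, hp, hq]; ring
  | mul_X p b hp =>
      have hmul : ∀ u v : Polynomial (MvPolynomial Bool k), ∀ b' : Bool,
          dmCoeff b' (u * v) = u * dmCoeff b' v + v * dmCoeff b' u := by
        intro u v b'
        rw [Derivation.leibniz, smul_eq_mul, smul_eq_mul]
      have hq : Qpoly k (p * MvPolynomial.X b) = Qpoly k p * Qpoly k (MvPolynomial.X b) := by
        simp [Qpoly]
      cases b with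
      | false =>
          have hx : Qpoly k (MvPolynomial.X false)
              = C (MvPolynomial.X true) + C (MvPolynomial.X false) * X := by simp [Qpoly]
          have h1 : dmCoeff (k := k) false (Qpoly k (MvPolynomial.X false)) = X := by
            rw [hx, map_add, hmul]
            simp
          have h2 : dmCoeff (k := k) true (Qpoly k (MvPolynomial.X false)) = 1 := by
            rw [hx, map_add, hmul]
            simp [MvPolynomial.pderiv_X_of_ne (show (true:Bool) ≠ false by decide)]
          rw [hq, hmul, hmul, hp, h1, h2]
          ring
      | true =>
          have hx : Qpoly k (MvPolynomial.X true) = (X : Polynomial (MvPolynomial Bool k)) := by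
            simp [Qpoly]
          rw [hq, hmul, hmul, hp, hx]
          simp only [dmCoeff_X, mul_zero, add_zero]
          ring

lemma aeval_map_eq (φ : L) (P : Polynomial (MvPolynomial Bool k)) :
    Polynomial.aeval φ (P.map (algebraMap (MvPolynomial Bool k) (AlphaTField k)))
      = eval₂ (jhom k L) φ P := by
  rw [aeval_def, eval₂_map]; rfl

theorem deriv_algebraMap_eq_zero (D : Derivation k L L)
    (hα : D (algebraMap (AlphaTField k) L (alphaGen k)) = 0)
    (ht : D (algebraMap (AlphaTField k) L (tGen k)) = 0) (x : AlphaTField k) :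
    D (algebraMap (AlphaTField k) L x) = 0 := by
  obtain ⟨r, s, hs, hx⟩ := IsFractionRing.div_surjective (A := MvPolynomial Bool k) x
  have hs0 : s ≠ 0 := nonZeroDivisors.ne_zero hs
  have hjs : jhom k L s ≠ 0 := fun h => hs0 (jhom_injective (L := L) (by rw [h, map_zero]))
  have hr : D (jhom k L r) = 0 := by rw [deriv_jhom, hα, ht]; ring
  have hsD : D (jhom k L s) = 0 := by rw [deriv_jhom, hα, ht]; ring
  have hxL : algebraMap (AlphaTField k) L x * jhom k L s = jhom k L r := by
    rw [← hx, map_div₀]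
    have : jhom k L s = algebraMap (AlphaTField k) L
        (algebraMap (MvPolynomial Bool k) (AlphaTField k) s) := rfl
    rw [this, div_mul_cancel₀]
    · rfl
    · rw [← this]; exact hjs
  have hD := congrArg D hxL
  rw [Derivation.leibniz, hsD, hr, smul_eq_mul, smul_eq_mul, mul_zero, zero_add] at hD
  exact (mul_eq_zero.mp hD).resolve_left hjs

theorem deriv_phi_eq (f : MvPolynomial Bool k) (φ : L) (D : Derivation k L L) :
    D (Polynomial.aeval φ (burgerQ k f)) =
      eval₂ (jhom k L) φ (dmCoeff true (Qpoly k f))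
          * (φ * D (algebraMap (AlphaTField k) L (alphaGen k))
             + D (algebraMap (AlphaTField k) L (tGen k)))
      + Polynomial.aeval φ (derivative (burgerQ k f)) * D φ := by
  have hd : derivative (burgerQ k f)
      = (derivative (Qpoly k f)).map (algebraMap (MvPolynomial Bool k) (AlphaTField k)) := by
    rw [← map_Qpoly, derivative_map]
  rw [eval_Qpoly, deriv_eval₂, hd, aeval_map_eq, dmCoeff_Qpoly, eval₂_mul, eval₂_X]
  ring

theorem adjoin_top {φ : L} (hint : IsIntegral (AlphaTField k) φ)
    (hgen : IntermediateField.adjoin (AlphaTField k) {φ} = ⊤) :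
    Algebra.adjoin (AlphaTField k) {φ} = ⊤ := by
  rw [← IntermediateField.adjoin_simple_toSubalgebra_of_isAlgebraic hint.isAlgebraic, hgen,
    IntermediateField.top_toSubalgebra]

theorem derivation_ext (f : MvPolynomial Bool k) {φ : L}
    (hroot : Polynomial.aeval φ (burgerQ k f) = 0)
    (hsimple : Polynomial.aeval φ (Polynomial.derivative (burgerQ k f)) ≠ 0)
    (hint : IsIntegral (AlphaTField k) φ)
    (hgen : IntermediateField.adjoin (AlphaTField k) {φ} = ⊤)
    (D₁ D₂ : Derivation k L L)
    (hα : D₁ (algebraMap (AlphaTField k) L (alphaGen k))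
        = D₂ (algebraMap (AlphaTField k) L (alphaGen k)))
    (ht : D₁ (algebraMap (AlphaTField k) L (tGen k))
        = D₂ (algebraMap (AlphaTField k) L (tGen k))) :
    D₁ = D₂ := by
  set e := D₁ - D₂ with he
  have heα : e (algebraMap (AlphaTField k) L (alphaGen k)) = 0 := by
    rw [he, Derivation.sub_apply, hα, sub_self]
  have het : e (algebraMap (AlphaTField k) L (tGen k)) = 0 := by
    rw [he, Derivation.sub_apply, ht, sub_self]
  have hK : ∀ x, e (algebraMap (AlphaTField k) L x) = 0 :=
    deriv_algebraMap_eq_zero e heα het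
  have hφ : e φ = 0 := by
    have h0 := deriv_phi_eq f φ e
    rw [hroot, map_zero, heα, het, mul_zero, zero_add, mul_zero, zero_add] at h0
    exact (mul_eq_zero.mp h0.symm).resolve_left hsimple
  have hADJ := adjoin_top (L := L) hint hgen
  ext w
  have hw : w ∈ Algebra.adjoin (AlphaTField k) {φ} := by rw [hADJ]; trivial
  have : e w = 0 := by
    induction hw using Algebra.adjoin_induction with
    | mem x hx => rw [Set.mem_singleton_iff.mp hx]; exact hφ
    | algebraMap r => exact hK r
    | add x y hx hy hx' hy' => rw [map_add, hx', hy', add_zero]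
    | mul x y hx hy hx' hy' =>
        rw [Derivation.leibniz, hx', hy', smul_zero, smul_zero, add_zero]
  rw [he, Derivation.sub_apply] at this
  exact sub_eq_zero.mp this

theorem burger_core (f : MvPolynomial Bool k) {φ : L}
    (hroot : Polynomial.aeval φ (burgerQ k f) = 0)
    (hsimple : Polynomial.aeval φ (Polynomial.derivative (burgerQ k f)) ≠ 0)
    (Dα Dt : Derivation k L L)
    (h1 : Dα (algebraMap (AlphaTField k) L (alphaGen k)) = 1)
    (h2 : Dα (algebraMap (AlphaTField k) L (tGen k)) = 0)
    (h3 : Dt (algebraMap (AlphaTField k) L (alphaGen k)) = 0)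
    (h4 : Dt (algebraMap (AlphaTField k) L (tGen k)) = 1) :
    Dα φ = φ * Dt φ := by
  have hA := deriv_phi_eq f φ Dα
  have hT := deriv_phi_eq f φ Dt
  rw [hroot, map_zero, h1, h2, mul_one, add_zero] at hA
  rw [hroot, map_zero, h3, h4, mul_zero, zero_add, mul_one] at hT
  apply mul_left_cancel₀ hsimple
  linear_combination (-1 : L) * hA + φ * hT

section Existence

open TrivSqZeroExt

variable (k L) in
/-- the map `k[α,t] → L[ε]` with prescribed `ε`-parts of `α, t`. -/
noncomputable def psi0 (vα vt : L) : MvPolynomial Bool k →+* TrivSqZeroExt L L :=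
  MvPolynomial.eval₂Hom (algebraMap k (TrivSqZeroExt L L))
    (fun b => match b with
      | false => (algebraMap (AlphaTField k) L (alphaGen k), vα)
      | true => (algebraMap (AlphaTField k) L (tGen k), vt))

lemma fst_psi0 (vα vt : L) (r : MvPolynomial Bool k) :
    (psi0 k L vα vt r).fst = jhom k L r := by
  have : ((TrivSqZeroExt.fstHom k L L : TrivSqZeroExt L L →ₐ[k] L) :
      TrivSqZeroExt L L →+* L).comp (psi0 k L vα vt) = jhom k L := by
    apply MvPolynomial.ringHom_ext
    · intro c
      simp only [RingHom.comp_apply, psi0, MvPolynomial.eval₂Hom_C]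
      rw [jhom_C]
      exact (TrivSqZeroExt.fstHom k L L).commutes c
    · intro b
      cases b <;>
        simp only [RingHom.comp_apply, psi0, MvPolynomial.eval₂Hom_X'] <;> rfl
  exact RingHom.congr_fun this r

lemma isUnit_psi0 (vα vt : L) (s : (nonZeroDivisors (MvPolynomial Bool k))) :
    IsUnit (psi0 k L vα vt s) := by
  rw [TrivSqZeroExt.isUnit_iff_isUnit_fst, fst_psi0, isUnit_iff_ne_zero]
  exact fun h => nonZeroDivisors.ne_zero s.2 (jhom_injective (L := L) (by rw [h, map_zero]))

variable (k L) in
/-- the map `k(α,t) → L[ε]` with prescribed `ε`-parts of `α, t`. -/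
noncomputable def psiK (vα vt : L) : AlphaTField k →+* TrivSqZeroExt L L :=
  IsLocalization.lift (M := nonZeroDivisors (MvPolynomial Bool k)) (isUnit_psi0 vα vt)

lemma psiK_algebraMap (vα vt : L) (r : MvPolynomial Bool k) :
    psiK k L vα vt (algebraMap (MvPolynomial Bool k) (AlphaTField k) r) = psi0 k L vα vt r :=
  IsLocalization.lift_eq _ r

lemma fst_psiK (vα vt : L) (x : AlphaTField k) :
    (psiK k L vα vt x).fst = algebraMap (AlphaTField k) L x := by
  have : ((TrivSqZeroExt.fstHom k L L : TrivSqZeroExt L L →ₐ[k] L) :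
      TrivSqZeroExt L L →+* L).comp (psiK k L vα vt) = algebraMap (AlphaTField k) L := by
    apply IsLocalization.ringHom_ext (nonZeroDivisors (MvPolynomial Bool k))
    refine RingHom.ext fun r => ?_
    simp only [RingHom.comp_apply, psiK_algebraMap]
    exact fst_psi0 vα vt r
  exact RingHom.congr_fun this x

lemma fst_eval₂_psiK (vα vt : L) (P : Polynomial (AlphaTField k)) (z : TrivSqZeroExt L L) :
    (Polynomial.eval₂ (psiK k L vα vt) z P).fst
      = Polynomial.eval₂ (algebraMap (AlphaTField k) L) z.fst P := by
  rw [show (Polynomial.eval₂ (psiK k L vα vt) z P).fst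
      = ((TrivSqZeroExt.fstHom k L L : TrivSqZeroExt L L →ₐ[k] L) :
        TrivSqZeroExt L L →+* L) (Polynomial.eval₂ (psiK k L vα vt) z P) from rfl,
    Polynomial.hom_eval₂]
  congr 1
  apply IsLocalization.ringHom_ext (nonZeroDivisors (MvPolynomial Bool k))
  refine RingHom.ext fun r => ?_
  simp only [RingHom.comp_apply, psiK_algebraMap]
  exact fst_psi0 vα vt r

lemma snd_eval₂_psiK (vα vt : L) (P : Polynomial (AlphaTField k)) (u v : L) :
    (Polynomial.eval₂ (psiK k L vα vt) (u, v) P).snd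
      = (Polynomial.eval₂ (psiK k L vα vt) (TrivSqZeroExt.inl u) P).snd
        + Polynomial.eval₂ (algebraMap (AlphaTField k) L) u (derivative P) * v := by
  induction P using Polynomial.induction_on' with
  | add p q hp hq =>
      set z : TrivSqZeroExt L L := (u, v) with hzdef
      clear_value z
      simp only [eval₂_add, TrivSqZeroExt.snd_add, derivative_add, map_add, hp, hq]; ring
  | monomial n c =>
      have hfz : TrivSqZeroExt.fst ((u, v) : TrivSqZeroExt L L) = u := rfl
      have hsz : TrivSqZeroExt.snd ((u, v) : TrivSqZeroExt L L) = v := rfl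
      set z : TrivSqZeroExt L L := (u, v) with hzdef
      clear_value z
      simp only [eval₂_monomial, TrivSqZeroExt.snd_mul, TrivSqZeroExt.snd_pow,
        TrivSqZeroExt.fst_pow, TrivSqZeroExt.fst_inl, TrivSqZeroExt.snd_inl,
        fst_psiK, op_smul_eq_smul, smul_eq_mul, hfz, hsz, derivative_monomial,
        eval₂_mul, eval₂_natCast, map_mul, map_natCast, smul_zero, mul_zero,
        Nat.pred_eq_sub_one]
      ring

theorem exists_derivation {φ : L}
    (hint : IsIntegral (AlphaTField k) φ)
    (hm' : Polynomial.aeval φ (derivative (minpoly (AlphaTField k) φ)) ≠ 0)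
    (hgen : IntermediateField.adjoin (AlphaTField k) {φ} = ⊤) (vα vt : L) :
    ∃ D : Derivation k L L,
      D (algebraMap (AlphaTField k) L (alphaGen k)) = vα ∧
      D (algebraMap (AlphaTField k) L (tGen k)) = vt := by
  classical
  set K := AlphaTField k
  set ψ := psiK k L vα vt with hψ
  set m := minpoly K φ with hm
  set E := (Polynomial.eval₂ ψ (TrivSqZeroExt.inl φ) m).snd with hE
  set c : L := -E / Polynomial.aeval φ (derivative m) with hc
  have hz : Polynomial.eval₂ ψ ((φ, c) : TrivSqZeroExt L L) m = 0 := by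
    apply TrivSqZeroExt.ext
    · erw [hψ, fst_eval₂_psiK]
      show Polynomial.eval₂ (algebraMap K L) φ m = (0 : TrivSqZeroExt L L).fst
      rw [← Polynomial.aeval_def, minpoly.aeval]
      rfl
    · rw [hψ, snd_eval₂_psiK]
      show E + Polynomial.eval₂ (algebraMap K L) φ (derivative m) * c
        = (0 : TrivSqZeroExt L L).snd
      rw [← Polynomial.aeval_def, hc]
      field_simp
      ring_nf
      rfl
  let lift : AdjoinRoot m →+* TrivSqZeroExt L L := AdjoinRoot.lift ψ (φ, c) hz
  let e : AdjoinRoot m ≃ₐ[K] L :=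
    (IntermediateField.adjoinRootEquivAdjoin K hint).trans
      ((IntermediateField.equivOfEq hgen).trans IntermediateField.topEquiv)
  have he_root : e (AdjoinRoot.root m) = φ := by
    show ((IntermediateField.equivOfEq hgen).trans IntermediateField.topEquiv)
      ((IntermediateField.adjoinRootEquivAdjoin K hint) (AdjoinRoot.root m)) = φ
    rw [IntermediateField.adjoinRootEquivAdjoin_apply_root]
    rfl
  let σ : L →+* TrivSqZeroExt L L := lift.comp (e.symm.toAlgHom : L →+* AdjoinRoot m)
  have hσK : ∀ x : K, σ (algebraMap K L x) = ψ x := by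
    intro x
    show lift (e.symm (algebraMap K L x)) = ψ x
    rw [AlgEquiv.commutes, AdjoinRoot.algebraMap_eq]
    exact AdjoinRoot.lift_of hz
  have hσφ : σ φ = ((φ, c) : TrivSqZeroExt L L) := by
    show lift (e.symm φ) = _
    have : e.symm φ = AdjoinRoot.root m := by
      rw [← he_root, AlgEquiv.symm_apply_apply]
    rw [this]
    exact AdjoinRoot.lift_root hz
  have hfstσ : ∀ w : L, (σ w).fst = w := by
    intro w
    have hw : w ∈ Algebra.adjoin K {φ} := by rw [adjoin_top hint hgen]; trivial
    induction hw using Algebra.adjoin_induction with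
    | mem x hx => rw [Set.mem_singleton_iff.mp hx, hσφ]; rfl
    | algebraMap r => rw [hσK, fst_psiK]
    | add x y hx hy hx' hy' => rw [map_add, TrivSqZeroExt.fst_add, hx', hy']
    | mul x y hx hy hx' hy' => rw [map_mul, TrivSqZeroExt.fst_mul, hx', hy']
  have hσalg : ∀ a : k, σ (algebraMap k L a) = TrivSqZeroExt.inl (algebraMap k L a) := by
    intro a
    rw [IsScalarTower.algebraMap_apply k K L, hσK]
    rw [IsScalarTower.algebraMap_apply k (MvPolynomial Bool k) K, hψ, psiK_algebraMap]
    rw [show (algebraMap k (MvPolynomial Bool k) a) = MvPolynomial.C a from rfl]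
    rw [show psi0 k L vα vt (MvPolynomial.C a)
      = algebraMap k (TrivSqZeroExt L L) a from MvPolynomial.eval₂Hom_C _ _ a]
    rw [TrivSqZeroExt.algebraMap_eq_inl']
    exact congrArg TrivSqZeroExt.inl (jhom_C a).symm
  refine ⟨{ toFun := fun w => (σ w).snd
            map_add' := fun x y => by
              show (σ (x + y)).snd = (σ x).snd + (σ y).snd
              rw [map_add, TrivSqZeroExt.snd_add]
            map_smul' := fun a w => by
              show (σ (a • w)).snd = a • (σ w).snd
              rw [Algebra.smul_def, map_mul, hσalg, TrivSqZeroExt.snd_mul,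
                TrivSqZeroExt.fst_inl, TrivSqZeroExt.snd_inl, smul_zero, add_zero,
                smul_eq_mul, ← Algebra.smul_def]
            map_one_eq_zero' := by
              simp only [LinearMap.coe_mk, AddHom.coe_mk]
              rw [map_one]; rfl
            leibniz' := fun a b => by
              simp only [LinearMap.coe_mk, AddHom.coe_mk]
              rw [map_mul, TrivSqZeroExt.snd_mul, hfstσ, hfstσ, op_smul_eq_smul] },
        ?_, ?_⟩
  · show (σ (algebraMap K L (alphaGen k))).snd = vα
    rw [hσK, hψ, show alphaGen k
        = algebraMap (MvPolynomial Bool k) K (MvPolynomial.X false) from rfl,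
      psiK_algebraMap,
      show psi0 k L vα vt (MvPolynomial.X false)
        = ((algebraMap (AlphaTField k) L (alphaGen k), vα) : TrivSqZeroExt L L) from
        MvPolynomial.eval₂Hom_X' _ _ false]
    rfl
  · show (σ (algebraMap K L (tGen k))).snd = vt
    rw [hσK, hψ, show tGen k
        = algebraMap (MvPolynomial Bool k) K (MvPolynomial.X true) from rfl,
      psiK_algebraMap,
      show psi0 k L vα vt (MvPolynomial.X true)
        = ((algebraMap (AlphaTField k) L (tGen k), vt) : TrivSqZeroExt L L) from
        MvPolynomial.eval₂Hom_X' _ _ true]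
    rfl

end Existence

end BurgerAux

/-- **Burger's equation lemma.** Let `k` be a field, `f ∈ k[t,x]`, and
`q(α,t,x) = f(t+αx,x) ∈ k[α,t,x]`. Let `φ` be a simple root in `x` of `q` in a field
`L = k(α,t,φ)`. Then the derivations `∂_α` and `∂_t` of `k(α,t)` (the unique `k`-linear
derivations sending `(α,t)` to `(1,0)` and `(0,1)` respectively) extend uniquely to `L`, and
the extensions satisfy `∂_α φ = φ · ∂_t φ`. -/
theorem burger_equation (k : Type*) [Field k] (f : MvPolynomial Bool k)
    (L : Type*) [Field L] [Algebra (AlphaTField k) L]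
    [Algebra k L] [IsScalarTower k (AlphaTField k) L]
    (φ : L)
    (hroot : Polynomial.aeval φ (burgerQ k f) = 0)
    (hsimple : Polynomial.aeval φ (Polynomial.derivative (burgerQ k f)) ≠ 0)
    (hgen : IntermediateField.adjoin (AlphaTField k) {φ} = ⊤) :
    (∃! Dα : Derivation k L L,
        Dα (algebraMap (AlphaTField k) L (alphaGen k)) = 1 ∧
        Dα (algebraMap (AlphaTField k) L (tGen k)) = 0) ∧
    (∃! Dt : Derivation k L L,
        Dt (algebraMap (AlphaTField k) L (alphaGen k)) = 0 ∧
        Dt (algebraMap (AlphaTField k) L (tGen k)) = 1) ∧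
    (∀ Dα Dt : Derivation k L L,
        Dα (algebraMap (AlphaTField k) L (alphaGen k)) = 1 →
        Dα (algebraMap (AlphaTField k) L (tGen k)) = 0 →
        Dt (algebraMap (AlphaTField k) L (alphaGen k)) = 0 →
        Dt (algebraMap (AlphaTField k) L (tGen k)) = 1 →
        Dα φ = φ * Dt φ) := by
  classical
  have hq0 : burgerQ k f ≠ 0 := by
    intro h
    apply hsimple
    rw [h]
    simp
  have halg : IsAlgebraic (AlphaTField k) φ := ⟨burgerQ k f, hq0, hroot⟩
  have hint : IsIntegral (AlphaTField k) φ := halg.isIntegral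
  obtain ⟨s, hs⟩ := minpoly.dvd (AlphaTField k) φ hroot
  have hm' : Polynomial.aeval φ
      (Polynomial.derivative (minpoly (AlphaTField k) φ)) ≠ 0 := by
    intro h0
    apply hsimple
    rw [hs, derivative_mul, map_add, map_mul, map_mul, h0, zero_mul,
      minpoly.aeval, zero_mul, add_zero]
  obtain ⟨Dα, hDα1, hDα2⟩ := BurgerAux.exists_derivation hint hm' hgen 1 0
  obtain ⟨Dt, hDt1, hDt2⟩ := BurgerAux.exists_derivation hint hm' hgen 0 1
  refine ⟨⟨Dα, ⟨hDα1, hDα2⟩, ?_⟩, ⟨Dt, ⟨hDt1, hDt2⟩, ?_⟩, ?_⟩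
  · rintro D ⟨h1, h2⟩
    exact BurgerAux.derivation_ext f hroot hsimple hint hgen D Dα
      (by rw [h1, hDα1]) (by rw [h2, hDα2])
  · rintro D ⟨h1, h2⟩
    exact BurgerAux.derivation_ext f hroot hsimple hint hgen D Dt
      (by rw [h1, hDt1]) (by rw [h2, hDt2])
  · intro Dα' Dt' h1 h2 h3 h4
    exact BurgerAux.burger_core f hroot hsimple Dα' Dt' h1 h2 h3 h4
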